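/- Let p ≥ 1 and let f(z) = ∑_k a_k z^k be entire with |f(z)| ≤ C_f e^{B|z|^p}. For any z ≠ 0 and τ > 0, the Cauchy estimate gives |f^{(k)}(z)| ≤ C_f · k!/(τ|z|)^k · exp(B(1+τ)^p |z|^p); consequently, optimizing over τ, |f^{(k)}(z)| ≤ C_f · k! · b^k · k^{-k/p} · exp(B·2^p|z|^p) with b = (2^p B p e)^{1/p}. -/

import Mathlib

open Real in
lemma cauchy_aux {f : ℂ → ℂ} (hf : Differentiable ℂ f) (z : ℂ) {R M : ℝ} (hR : 0 < R)
    (hM : ∀ w : ℂ, ‖w - z‖ = R → ‖f w‖ ≤ M) (k : ℕ) :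
    ‖iteratedDeriv k f z‖ ≤ (Nat.factorial k : ℝ) * M / R ^ k := by
  lift R to NNReal using hR.le with R' hR'
  have hR0 : (0 : NNReal) < R' := by exact_mod_cast hR
  have h := hf.hasFPowerSeriesOnBall z hR0
  set q := cauchyPowerSeries f z R' with hq
  have hM0 : 0 ≤ M := by
    refine (norm_nonneg (f (z + R'))).trans (hM _ ?_)
    simp [abs_of_pos hR]
  have hfac := h.factorial_smul (1 : ℂ) k
  have hID : iteratedDeriv k f z = iteratedFDeriv ℂ k f z fun _ => (1 : ℂ) :=
    iteratedDeriv_eq_iteratedFDeriv ..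
  have hnorm : ‖iteratedDeriv k f z‖ = (Nat.factorial k : ℝ) * ‖q k fun _ => (1 : ℂ)‖ := by
    rw [hID, ← hfac, nsmul_eq_mul, norm_mul]
    simp
  have h1 : ‖q k fun _ => (1 : ℂ)‖ ≤ ‖q k‖ := by
    simpa using (q k).le_opNorm fun _ => (1 : ℂ)
  have h2 : ‖q k‖ ≤ ((2 * π)⁻¹ * ∫ θ : ℝ in (0)..2 * π, ‖f (circleMap z R' θ)‖) * |(R' : ℝ)|⁻¹ ^ k :=
    norm_cauchyPowerSeries_le f z R' k
  have hint : (∫ θ : ℝ in (0)..2 * π, ‖f (circleMap z R' θ)‖) ≤ 2 * π * M := by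
    have : (∫ θ : ℝ in (0)..2 * π, ‖f (circleMap z R' θ)‖) ≤ ∫ _ : ℝ in (0)..2 * π, M := by
      apply intervalIntegral.integral_mono_on Real.two_pi_pos.le
      · exact ((hf.continuous.comp (continuous_circleMap z R')).norm).intervalIntegrable 0 (2 * π)
      · exact intervalIntegrable_const
      · intro θ _
        apply hM
        simp [circleMap_sub_center, abs_of_pos hR]
      
    simpa [mul_comm] using this
  have h3 : ((2 * π)⁻¹ * ∫ θ : ℝ in (0)..2 * π, ‖f (circleMap z R' θ)‖) ≤ M := by
    rw [inv_mul_le_iff₀ Real.two_pi_pos]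
    linarith [hint]
  calc ‖iteratedDeriv k f z‖ = (Nat.factorial k : ℝ) * ‖q k fun _ => (1 : ℂ)‖ := hnorm
    _ ≤ (Nat.factorial k : ℝ) * (M * |(R' : ℝ)|⁻¹ ^ k) := by
        apply mul_le_mul_of_nonneg_left _ (by positivity)
        exact h1.trans (h2.trans (mul_le_mul_of_nonneg_right h3 (by positivity)))
    _ = (Nat.factorial k : ℝ) * M / (R' : ℝ) ^ k := by
        rw [abs_of_pos hR]
        field_simp
        rw [mul_assoc, ← mul_pow, one_div_mul_cancel hR.ne', one_pow, mul_one]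


/-- Cauchy derivative estimates for an entire function with `|f(z)| ≤ C_f e^{B|z|^p}`:
first the bound on circles of radius `τ|z|`, then the optimized bound with
`b = (2^p B p e)^{1/p}`. -/
theorem cauchy_derivative_estimate (p B C_f : ℝ) (hp : 1 ≤ p) (hB : 0 < B) (hCf : 0 < C_f)
    (f : ℂ → ℂ) (hf : Differentiable ℂ f)
    (hgrowth : ∀ z : ℂ, ‖f z‖ ≤ C_f * Real.exp (B * ‖z‖ ^ p)) :
    (∀ z : ℂ, z ≠ 0 → ∀ τ : ℝ, 0 < τ → ∀ k : ℕ,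
      ‖iteratedDeriv k f z‖ ≤
        C_f * (Nat.factorial k : ℝ) / (τ * ‖z‖) ^ k *
          Real.exp (B * (1 + τ) ^ p * ‖z‖ ^ p)) ∧
    (∀ z : ℂ, z ≠ 0 → ∀ k : ℕ,
      ‖iteratedDeriv k f z‖ ≤
        C_f * (Nat.factorial k : ℝ) * ((2 ^ p * B * p * Real.exp 1) ^ ((1 : ℝ) / p)) ^ k *
          (k : ℝ) ^ (-((k : ℝ) / p)) * Real.exp (B * 2 ^ p * ‖z‖ ^ p)) := by
  have hpart1 : ∀ z : ℂ, z ≠ 0 → ∀ τ : ℝ, 0 < τ → ∀ k : ℕ,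
      ‖iteratedDeriv k f z‖ ≤
        C_f * (Nat.factorial k : ℝ) / (τ * ‖z‖) ^ k *
          Real.exp (B * (1 + τ) ^ p * ‖z‖ ^ p) := by
    intro z hz τ hτ k
    have hzn : 0 < ‖z‖ := norm_pos_iff.mpr hz
    have hR : 0 < τ * ‖z‖ := mul_pos hτ hzn
    have hp0 : 0 ≤ p := by linarith
    have hM : ∀ w : ℂ, ‖w - z‖ = τ * ‖z‖ →
        ‖f w‖ ≤ C_f * Real.exp (B * (1 + τ) ^ p * ‖z‖ ^ p) := by
      intro w hw
      refine (hgrowth w).trans ?_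
      have hwle : ‖w‖ ≤ (1 + τ) * ‖z‖ := by
        calc ‖w‖ = ‖z + (w - z)‖ := by ring_nf
          _ ≤ ‖z‖ + ‖w - z‖ := norm_add_le _ _
          _ = (1 + τ) * ‖z‖ := by rw [hw]; ring
      have : ‖w‖ ^ p ≤ ((1 + τ) * ‖z‖) ^ p :=
        Real.rpow_le_rpow (norm_nonneg w) hwle hp0
      rw [Real.mul_rpow (by linarith) hzn.le] at this
      refine mul_le_mul_of_nonneg_left (Real.exp_le_exp.mpr ?_) hCf.le
      rw [mul_assoc]
      exact mul_le_mul_of_nonneg_left this hB.le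
    have := cauchy_aux hf z hR hM k
    calc ‖iteratedDeriv k f z‖
        ≤ (Nat.factorial k : ℝ) * (C_f * Real.exp (B * (1 + τ) ^ p * ‖z‖ ^ p)) / (τ * ‖z‖) ^ k :=
          this
      _ = C_f * (Nat.factorial k : ℝ) / (τ * ‖z‖) ^ k * Real.exp (B * (1 + τ) ^ p * ‖z‖ ^ p) := by
          ring
  refine ⟨hpart1, ?_⟩
  intro z hz k
  have hzn : 0 < ‖z‖ := norm_pos_iff.mpr hz
  have hp0 : 0 < p := by linarith
  have hpne : p ≠ 0 := hp0.ne'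
  have h2p : (0:ℝ) < 2 ^ p := Real.rpow_pos_of_pos two_pos p
  have hs : 0 < ‖z‖ ^ p := Real.rpow_pos_of_pos hzn p
  set s : ℝ := ‖z‖ ^ p with hsdef
  set A : ℝ := B * 2 ^ p with hAdef
  have hA : 0 < A := mul_pos hB h2p
  set b : ℝ := (2 ^ p * B * p * Real.exp 1) ^ ((1 : ℝ) / p) with hbdef
  have hb : 0 < b := Real.rpow_pos_of_pos (by positivity) _
  rcases Nat.eq_zero_or_pos k with rfl | hk
  · simp only [iteratedDeriv_zero, Nat.factorial_zero, Nat.cast_one, mul_one, pow_zero,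
      Nat.cast_zero, CharP.cast_eq_zero, zero_div, neg_zero, Real.rpow_zero]
    refine (hgrowth z).trans (mul_le_mul_of_nonneg_left (Real.exp_le_exp.mpr ?_) hCf.le)
    have h1 : (1:ℝ) ≤ 2 ^ p := Real.one_le_rpow one_le_two hp0.le
    calc B * ‖z‖ ^ p ≤ B * ‖z‖ ^ p * 2 ^ p :=
          le_mul_of_one_le_right (by positivity) h1
      _ = B * 2 ^ p * ‖z‖ ^ p := by ring
  · have hkR : (0:ℝ) < (k : ℝ) := by exact_mod_cast hk
    set c : ℝ := A * p * s with hcdef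
    have hc : 0 < c := by positivity
    set τ : ℝ := ((k : ℝ) / c) ^ ((1:ℝ) / p) with hτdef
    have hτ : 0 < τ := Real.rpow_pos_of_pos (by positivity) _
    have hτp : τ ^ p = (k : ℝ) / c := by
      rw [hτdef, ← Real.rpow_mul (by positivity), one_div_mul_cancel hpne, Real.rpow_one]
    have key := hpart1 z hz τ hτ k
    -- exponent bound
    have hτpnn : (0:ℝ) ≤ τ ^ p := Real.rpow_nonneg hτ.le p
    have h2pow : (1 + τ) ^ p ≤ 2 ^ p * (1 + τ ^ p) := by
      rcases le_total τ 1 with h | h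
      · have h1 : (1 + τ) ^ p ≤ 2 ^ p :=
          Real.rpow_le_rpow (by linarith) (by linarith) hp0.le
        calc (1 + τ) ^ p ≤ 2 ^ p := h1
          _ ≤ 2 ^ p * (1 + τ ^ p) := le_mul_of_one_le_right h2p.le (by linarith)
      · have h1 : (1 + τ) ^ p ≤ (2 * τ) ^ p :=
          Real.rpow_le_rpow (by linarith) (by linarith) hp0.le
        calc (1 + τ) ^ p ≤ (2 * τ) ^ p := h1
          _ = 2 ^ p * τ ^ p := Real.mul_rpow (by norm_num) hτ.le
          _ ≤ 2 ^ p * (1 + τ ^ p) := by nlinarith [h2p]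
    have hAτs : A * τ ^ p * s = (k : ℝ) / p := by
      rw [hτp, hcdef]
      field_simp
    have hexp : B * (1 + τ) ^ p * s ≤ A * s + (k : ℝ) / p := by
      have h1 : B * (1 + τ) ^ p * s ≤ B * (2 ^ p * (1 + τ ^ p)) * s := by
        have := mul_le_mul_of_nonneg_left h2pow hB.le
        exact mul_le_mul_of_nonneg_right this hs.le
      have h2 : B * (2 ^ p * (1 + τ ^ p)) * s = A * s + A * τ ^ p * s := by
        rw [hAdef]; ring
      rw [h2, hAτs] at h1
      exact h1
    -- algebraic identity
    have hbp : b ^ p = 2 ^ p * B * p * Real.exp 1 := by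
      rw [hbdef, ← Real.rpow_mul (by positivity), one_div_mul_cancel hpne, Real.rpow_one]
    have hbtr : (b * τ * ‖z‖) ^ p = Real.exp 1 * (k : ℝ) := by
      rw [Real.mul_rpow (by positivity) hzn.le, Real.mul_rpow hb.le hτ.le, hbp, hτp, ← hsdef,
        hcdef, hAdef]
      field_simp
    have hbtrk : (b * τ * ‖z‖) ^ k = (Real.exp 1 * (k : ℝ)) ^ ((k : ℝ) / p) := by
      rw [← hbtr, ← Real.rpow_natCast (b * τ * ‖z‖) k, ← Real.rpow_mul (by positivity)]
      congr 1
      field_simp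
    have hek : (Real.exp 1 * (k : ℝ)) ^ ((k : ℝ) / p) =
        Real.exp ((k : ℝ) / p) * (k : ℝ) ^ ((k : ℝ) / p) := by
      rw [Real.mul_rpow (Real.exp_pos 1).le hkR.le, Real.exp_one_rpow]
    have hmain : b ^ k * (k : ℝ) ^ (-((k : ℝ) / p)) * (τ * ‖z‖) ^ k =
        Real.exp ((k : ℝ) / p) := by
      have h1 : b ^ k * (τ * ‖z‖) ^ k = (b * τ * ‖z‖) ^ k := by
        rw [← mul_pow, mul_assoc]
      calc b ^ k * (k : ℝ) ^ (-((k : ℝ) / p)) * (τ * ‖z‖) ^ k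
          = (b * τ * ‖z‖) ^ k * (k : ℝ) ^ (-((k : ℝ) / p)) := by rw [← h1]; ring
        _ = Real.exp ((k : ℝ) / p) * ((k : ℝ) ^ ((k : ℝ) / p) * (k : ℝ) ^ (-((k : ℝ) / p))) := by
            rw [hbtrk, hek]; ring
        _ = Real.exp ((k : ℝ) / p) := by
            rw [← Real.rpow_add hkR, add_neg_cancel, Real.rpow_zero, mul_one]
    have hRk : (0:ℝ) < (τ * ‖z‖) ^ k := by positivity
    calc ‖iteratedDeriv k f z‖
        ≤ C_f * (Nat.factorial k : ℝ) / (τ * ‖z‖) ^ k * Real.exp (B * (1 + τ) ^ p * s) := key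
      _ ≤ C_f * (Nat.factorial k : ℝ) / (τ * ‖z‖) ^ k *
            (Real.exp (A * s) * Real.exp ((k : ℝ) / p)) := by
          rw [← Real.exp_add]
          exact mul_le_mul_of_nonneg_left (Real.exp_le_exp.mpr hexp) (by positivity)
      _ = C_f * (Nat.factorial k : ℝ) *
            (b ^ k * (k : ℝ) ^ (-((k : ℝ) / p)) * (τ * ‖z‖) ^ k / (τ * ‖z‖) ^ k) *
            Real.exp (A * s) := by
          rw [hmain]; ring
      _ = C_f * (Nat.factorial k : ℝ) * b ^ k * (k : ℝ) ^ (-((k : ℝ) / p)) *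
            Real.exp (A * s) := by
          rw [mul_div_assoc, div_self hRk.ne']
          ring
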